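/- Let a = (a_j) be a tuple of m×m matrices over F, let T be an invertible m×m matrix over F, and suppose the matrices Ã_j defined by ε Ã_j = T⁻¹ a_j T − T⁻¹ (∂_j T) constitute a dlog-form with letters L_1,…,L_N and constant coefficient matrices over K. Then for every j, the ε-Laurent expansion of Tr(a_j) has vanishing coefficients in all negative orders, i.e. Tr(a_j)^{(k)} = 0 for all k < 0. -/

import Mathlib

open MvPolynomial

set_option synthInstance.maxHeartbeats 1000000
set_option maxHeartbeats 1000000

noncomputable section

/-- `K(x_1,…,x_M)`, the field of rational functions in the invariants. -/
abbrev FX (K : Type*) [Field K] (M : ℕ) : Type _ :=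
  FractionRing (MvPolynomial (Fin M) K)

/-- `F = K(x_1,…,x_M)(ε) ≅ K(x_1,…,x_M,ε)`, realized as rational functions in the
regulator `ε` over `K(x_1,…,x_M)`, so that it embeds canonically in the field of formal
Laurent series in `ε` over `K(x_1,…,x_M)`. -/
abbrev FE (K : Type*) [Field K] (M : ℕ) : Type _ :=
  RatFunc (FX K M)

/-- The regulator `ε`. -/
def eps (K : Type*) [Field K] (M : ℕ) : FE K M := RatFunc.X

/-- The `n`-th coefficient of the ε-Laurent expansion of `r ∈ F`. -/
def coeffL {K : Type*} [Field K] {M : ℕ} (r : FE K M) (n : ℤ) : FX K M :=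
  ((r : LaurentSeries (FX K M))).coeff n

/-- The element `(∂_j L_l)/L_l` of `F`, for a letter `L l ∈ K[x_1,…,x_M]`. -/
def dlogTerm {K : Type*} [Field K] {M N : ℕ} (L : Fin N → MvPolynomial (Fin M) K)
    (j : Fin M) (l : Fin N) : FE K M :=
  algebraMap (MvPolynomial (Fin M) K) (FE K M) (pderiv j (L l))
    / algebraMap (MvPolynomial (Fin M) K) (FE K M) (L l)

theorem Derivation.map_finset_prod {R A : Type*} [CommRing R] [CommRing A] [Algebra R A]
    (D : Derivation R A A) {ι : Type*} [DecidableEq ι] (s : Finset ι) (f : ι → A) :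
    D (∏ i ∈ s, f i) = ∑ i ∈ s, (∏ j ∈ s.erase i, f j) * D (f i) := by
  induction s using Finset.induction_on with
  | empty => simp
  | @insert x s hx ih =>
    rw [Finset.prod_insert hx, D.leibniz, ih, Finset.sum_insert hx, Finset.erase_insert hx,
      smul_eq_mul, smul_eq_mul, Finset.mul_sum]
    rw [add_comm]
    congr 1
    apply Finset.sum_congr rfl
    intro i hi
    rw [Finset.erase_insert_of_ne (fun h => hx (by rw [h]; exact hi)),
      Finset.prod_insert (fun h => hx (Finset.mem_of_mem_erase h))]
    ring

theorem Matrix.adjugate_apply_perm {A : Type*} [CommRing A] {n : ℕ}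
    (M : Matrix (Fin n) (Fin n) A) (i j : Fin n) :
    M.adjugate i j = ∑ σ ∈ Finset.univ.filter (fun σ : Equiv.Perm (Fin n) => σ i = j),
      ((Equiv.Perm.sign σ : ℤ) : A) * ∏ k ∈ Finset.univ.erase i, M (σ k) k := by
  rw [Matrix.adjugate_apply, Matrix.det_apply']
  rw [← Finset.sum_filter_add_sum_filter_not Finset.univ (fun σ : Equiv.Perm (Fin n) => σ i = j)]
  have h2 : ∀ σ ∈ Finset.univ.filter (fun σ : Equiv.Perm (Fin n) => ¬ σ i = j),
      ((Equiv.Perm.sign σ : ℤ) : A) * ∏ k, (M.updateRow j (Pi.single i 1)) (σ k) k = 0 := by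
    intro σ hσ
    rw [Finset.mem_filter] at hσ
    have h3 : (fun k => (M.updateRow j (Pi.single i 1)) (σ k) k) (σ⁻¹ j) = 0 := by
      simp only []
      rw [Equiv.Perm.inv_def, Equiv.apply_symm_apply, Matrix.updateRow_self]
      exact Pi.single_eq_of_ne (fun h => hσ.2 (by rw [← h, Equiv.apply_symm_apply])) 1
    rw [Finset.prod_eq_zero (f := fun k => (M.updateRow j (Pi.single i 1)) (σ k) k) (Finset.mem_univ (σ⁻¹ j)) h3, mul_zero]
  have h5 : ∑ σ ∈ Finset.univ.filter (fun σ : Equiv.Perm (Fin n) => ¬ σ i = j),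
      ((Equiv.Perm.sign σ : ℤ) : A) * ∏ k, (M.updateRow j (Pi.single i 1)) (σ k) k = 0 :=
    Finset.sum_eq_zero h2
  rw [h5, add_zero]
  apply Finset.sum_congr rfl
  intro σ hσ
  rw [Finset.mem_filter] at hσ
  congr 1
  rw [← Finset.mul_prod_erase Finset.univ _ (Finset.mem_univ i)]
  have h4 : (M.updateRow j (Pi.single i 1)) (σ i) i = 1 := by
    rw [hσ.2, Matrix.updateRow_self, Pi.single_eq_same]
  rw [h4, one_mul]
  apply Finset.prod_congr rfl
  intro k hk
  have h6 : σ k ≠ j := fun h => (Finset.mem_erase.mp hk).1 (σ.injective (h.trans hσ.2.symm))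
  rw [Matrix.updateRow_ne h6]

/-- Jacobi's formula for a derivation. -/
theorem Derivation.map_det {R A : Type*} [CommRing R] [CommRing A] [Algebra R A]
    (D : Derivation R A A) {n : ℕ} (M : Matrix (Fin n) (Fin n) A) :
    D M.det = (M.adjugate * M.map D).trace := by
  rw [Matrix.det_apply', map_sum]
  have hterm : ∀ σ : Equiv.Perm (Fin n),
      D (((Equiv.Perm.sign σ : ℤ) : A) * ∏ k, M (σ k) k)
        = ∑ i, ((Equiv.Perm.sign σ : ℤ) : A)
            * ((∏ k ∈ Finset.univ.erase i, M (σ k) k) * D (M (σ i) i)) := by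
    intro σ
    rw [D.leibniz, D.map_intCast, smul_zero, add_zero, smul_eq_mul,
      D.map_finset_prod, Finset.mul_sum]
  rw [Finset.sum_congr rfl (fun σ _ => hterm σ), Finset.sum_comm]
  rw [Matrix.trace]
  apply Finset.sum_congr rfl
  intro i _
  rw [Matrix.diag_apply, Matrix.mul_apply]
  have : ∀ j, M.adjugate i j * (M.map D) j i
      = ∑ σ ∈ Finset.univ.filter (fun σ : Equiv.Perm (Fin n) => σ i = j),
          ((Equiv.Perm.sign σ : ℤ) : A) * ((∏ k ∈ Finset.univ.erase i, M (σ k) k) * D (M (σ i) i)) := by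
    intro j
    rw [Matrix.adjugate_apply_perm, Finset.sum_mul]
    apply Finset.sum_congr rfl
    intro σ hσ
    rw [Finset.mem_filter] at hσ
    rw [Matrix.map_apply, hσ.2, mul_assoc]
  rw [Finset.sum_congr rfl (fun j _ => this j), Finset.sum_fiberwise]

section LauAux
open Polynomial

variable {F : Type*} [Field F]

theorem coeLS_algebraMap (g : Polynomial F) :
    ((algebraMap (Polynomial F) (RatFunc F) g : RatFunc F) : LaurentSeries F)
      = HahnSeries.ofPowerSeries ℤ F (g : PowerSeries F) :=
  (RatFunc.coe_coe g).symm

theorem coeff_neg_algebraMap (g : Polynomial F) {k : ℤ} (hk : k < 0) :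
    ((algebraMap (Polynomial F) (RatFunc F) g : RatFunc F) : LaurentSeries F).coeff k = 0 := by
  rw [coeLS_algebraMap, HahnSeries.ofPowerSeries_apply]
  apply HahnSeries.embDomain_notin_range
  rintro ⟨n, hn⟩
  have hn' : (n : ℤ) = k := hn
  omega

theorem order_nonneg_algebraMap (g : Polynomial F)
    (h0 : ((algebraMap (Polynomial F) (RatFunc F) g : RatFunc F) : LaurentSeries F) ≠ 0) :
    0 ≤ ((algebraMap (Polynomial F) (RatFunc F) g : RatFunc F) : LaurentSeries F).order := by
  by_contra h
  exact h0 (HahnSeries.coeff_order_eq_zero.mp (coeff_neg_algebraMap g (not_le.mp h)))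

theorem order_eq_zero_algebraMap {g : Polynomial F} (h0 : g.coeff 0 ≠ 0) :
    ((algebraMap (Polynomial F) (RatFunc F) g : RatFunc F) : LaurentSeries F).order = 0 := by
  have hc : ((algebraMap (Polynomial F) (RatFunc F) g : RatFunc F) : LaurentSeries F).coeff
      ((0:ℕ):ℤ) = g.coeff 0 := by
    rw [coeLS_algebraMap, HahnSeries.ofPowerSeries_apply_coeff, Polynomial.coeff_coe]
  have hne : ((algebraMap (Polynomial F) (RatFunc F) g : RatFunc F) : LaurentSeries F) ≠ 0 := by
    intro h; rw [h] at hc; exact h0 (by simpa using hc.symm)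
  have h1 := HahnSeries.order_le_of_coeff_ne_zero (Γ := ℤ) (x :=
    ((algebraMap (Polynomial F) (RatFunc F) g : RatFunc F) : LaurentSeries F)) (g := (0:ℤ))
    (by rw [show ((0:ℤ)) = ((0:ℕ):ℤ) by norm_num, hc]; exact h0)
  exact le_antisymm h1 (order_nonneg_algebraMap g hne)

theorem coeff_neg_div {g h : Polynomial F} (h0 : g.coeff 0 ≠ 0) {k : ℤ} (hk : k < 0) :
    ((algebraMap (Polynomial F) (RatFunc F) h / algebraMap (Polynomial F) (RatFunc F) g
      : RatFunc F) : LaurentSeries F).coeff k = 0 := by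
  rw [map_div₀]
  set w := ((algebraMap (Polynomial F) (RatFunc F) h : RatFunc F) : LaurentSeries F) with hw
  set u := ((algebraMap (Polynomial F) (RatFunc F) g : RatFunc F) : LaurentSeries F) with hu
  by_cases hw0 : w = 0
  · simp [hw0]
  by_cases hz : w / u = 0
  · simp [hz]
  have hu0 : u ≠ 0 := by
    intro h'
    rw [h'] at hz
    simp at hz
  have hmul : (w / u) * u = w := div_mul_cancel₀ w hu0
  have horder : (w / u).order + u.order = w.order := by
    rw [← HahnSeries.order_mul hz hu0, hmul]
  apply HahnSeries.coeff_eq_zero_of_lt_order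
  have h1 : u.order = 0 := order_eq_zero_algebraMap h0
  have h2 : 0 ≤ w.order := order_nonneg_algebraMap h hw0
  omega

theorem exists_X_pow_mul (g : Polynomial F) (hg : g ≠ 0) :
    ∃ (n : ℕ) (h : Polynomial F), h.coeff 0 ≠ 0 ∧ g = Polynomial.X ^ n * h := by
  suffices H : ∀ (d : ℕ) (g : Polynomial F), g ≠ 0 → g.natDegree = d →
      ∃ (n : ℕ) (h : Polynomial F), h.coeff 0 ≠ 0 ∧ g = Polynomial.X ^ n * h from H g.natDegree g hg rfl
  intro d
  induction d using Nat.strong_induction_on with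
  | _ d ih =>
    intro g hg hn
    by_cases h0 : g.coeff 0 ≠ 0
    · exact ⟨0, g, h0, by rw [pow_zero, one_mul]⟩
    · push_neg at h0
      obtain ⟨g₁, rfl⟩ := Polynomial.X_dvd_iff.mpr h0
      have hg₁ : g₁ ≠ 0 := fun h => hg (by rw [h, mul_zero])
      have hdeg : g₁.natDegree < d := by
        rw [← hn, Polynomial.natDegree_mul Polynomial.X_ne_zero hg₁, Polynomial.natDegree_X]
        omega
      obtain ⟨n, h, hh, rfl⟩ := ih g₁.natDegree hdeg g₁ hg₁ rfl
      exact ⟨n + 1, h, hh, by ring⟩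

section Der
variable {R : Type*} [CommRing R] [Algebra R (RatFunc F)]
variable (D : Derivation R (RatFunc F) (RatFunc F))

theorem der_X_pow_eq_zero (hX : D RatFunc.X = 0) (n : ℕ) :
    D ((RatFunc.X : RatFunc F) ^ n) = 0 := by
  rw [D.leibniz_pow, hX, smul_zero, smul_zero]

theorem der_algebraMap_poly (hX : D RatFunc.X = 0)
    (hC : ∀ c : F, ∃ c', D (RatFunc.C c) = RatFunc.C c') (g : Polynomial F) :
    ∃ g' : Polynomial F, D (algebraMap (Polynomial F) (RatFunc F) g)
      = algebraMap (Polynomial F) (RatFunc F) g' := by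
  induction g using Polynomial.induction_on' with
  | add p q hp hq =>
    obtain ⟨p', hp'⟩ := hp
    obtain ⟨q', hq'⟩ := hq
    exact ⟨p' + q', by rw [map_add, map_add, hp', hq', map_add]⟩
  | monomial n c =>
    obtain ⟨c', hc'⟩ := hC c
    refine ⟨Polynomial.monomial n c', ?_⟩
    have key : ∀ e : F, algebraMap (Polynomial F) (RatFunc F) (Polynomial.monomial n e)
        = RatFunc.C e * RatFunc.X ^ n := by
      intro e
      rw [← Polynomial.C_mul_X_pow_eq_monomial, map_mul, map_pow, RatFunc.algebraMap_C,
        RatFunc.algebraMap_X]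
    rw [key, key, D.leibniz, der_X_pow_eq_zero D hX, smul_zero, zero_add, smul_eq_mul, hc']
    ring

theorem coeff_neg_dlog_poly (hX : D RatFunc.X = 0)
    (hC : ∀ c : F, ∃ c', D (RatFunc.C c) = RatFunc.C c')
    {g : Polynomial F} (hg : g ≠ 0) {k : ℤ} (hk : k < 0) :
    ((D (algebraMap (Polynomial F) (RatFunc F) g) / algebraMap (Polynomial F) (RatFunc F) g
      : RatFunc F) : LaurentSeries F).coeff k = 0 := by
  obtain ⟨n, h, h0, rfl⟩ := exists_X_pow_mul g hg
  have hh : h ≠ 0 := fun hc => h0 (by rw [hc, Polynomial.coeff_zero])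
  have hsplit : algebraMap (Polynomial F) (RatFunc F) (Polynomial.X ^ n * h)
      = RatFunc.X ^ n * algebraMap (Polynomial F) (RatFunc F) h := by
    rw [map_mul, map_pow, RatFunc.algebraMap_X]
  rw [hsplit, D.leibniz, der_X_pow_eq_zero D hX, smul_zero, add_zero, smul_eq_mul,
    mul_div_mul_left _ _ (pow_ne_zero n RatFunc.X_ne_zero)]
  obtain ⟨h', hh'⟩ := der_algebraMap_poly D hX hC h
  rw [hh']
  exact coeff_neg_div h0 hk

theorem coeff_neg_dlog (hX : D RatFunc.X = 0)
    (hC : ∀ c : F, ∃ c', D (RatFunc.C c) = RatFunc.C c')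
    {f : RatFunc F} (hf : f ≠ 0) {k : ℤ} (hk : k < 0) :
    ((D f / f : RatFunc F) : LaurentSeries F).coeff k = 0 := by
  set P := algebraMap (Polynomial F) (RatFunc F) f.num with hP
  set Q := algebraMap (Polynomial F) (RatFunc F) f.denom with hQ
  have hPQ : P / Q = f := RatFunc.num_div_denom f
  have hP0 : P ≠ 0 := by
    simp only [hP, ne_eq, map_eq_zero_iff _ (IsFractionRing.injective _ _)]
    exact RatFunc.num_ne_zero hf
  have hQ0 : Q ≠ 0 := by
    simp only [hQ, ne_eq, map_eq_zero_iff _ (IsFractionRing.injective _ _)]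
    exact RatFunc.denom_ne_zero f
  have hrel : P = f * Q := by rw [← hPQ]; field_simp
  have hmain : D f / f = D P / P - D Q / Q := by
    rw [div_sub_div _ _ hP0 hQ0, div_eq_div_iff hf (mul_ne_zero hP0 hQ0), hrel, D.leibniz,
      smul_eq_mul, smul_eq_mul]
    ring
  rw [hmain, map_sub, HahnSeries.coeff_sub,
    coeff_neg_dlog_poly D hX hC (RatFunc.num_ne_zero hf) hk,
    coeff_neg_dlog_poly D hX hC (RatFunc.denom_ne_zero f) hk, sub_zero]

end Der

end LauAux

theorem algMv_eq {K : Type*} [Field K] {M : ℕ} (p : MvPolynomial (Fin M) K) :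
    algebraMap (MvPolynomial (Fin M) K) (FE K M) p
      = RatFunc.C (algebraMap (MvPolynomial (Fin M) K) (FX K M) p) := by
  rw [RatFunc.algebraMap_apply, map_one, div_one, Polynomial.algebraMap_apply,
    RatFunc.algebraMap_C]

theorem algK_eq {K : Type*} [Field K] {M : ℕ} (c : K) :
    algebraMap K (FE K M) c = RatFunc.C (algebraMap K (FX K M) c) := by
  rw [RatFunc.algebraMap_apply, map_one, div_one, Polynomial.algebraMap_apply,
    RatFunc.algebraMap_C]

theorem dlog_trace_eq {K : Type*} [Field K] {M N m : ℕ}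
    (L : Fin N → MvPolynomial (Fin M) K) (j : Fin M)
    (α : Fin N → Matrix (Fin m) (Fin m) K) :
    (∑ l, dlogTerm L j l • (α l).map (algebraMap K (FE K M))).trace
      = RatFunc.C (∑ l, (algebraMap _ (FX K M) (pderiv j (L l)) / algebraMap _ (FX K M) (L l))
          * algebraMap K (FX K M) ((α l).trace)) := by
  rw [Matrix.trace_sum, map_sum]
  apply Finset.sum_congr rfl
  intro l _
  have htm : ((α l).map (algebraMap K (FE K M))).trace
      = algebraMap K (FE K M) ((α l).trace) := by
    simp [Matrix.trace, Matrix.diag, Matrix.map_apply]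
  rw [Matrix.trace_smul, smul_eq_mul, map_mul, map_div₀, dlogTerm, htm,
    algK_eq, algMv_eq, algMv_eq]

theorem eps_C_coeff {K : Type*} [Field K] {M : ℕ} (s : FX K M) {k : ℤ} (hk : k < 0) :
    ((eps K M * RatFunc.C s : FE K M) : LaurentSeries (FX K M)).coeff k = 0 := by
  rw [map_mul, show ((RatFunc.C s : FE K M) : LaurentSeries (FX K M)) = HahnSeries.C s by
    rw [← RatFunc.algebraMap_C, coeLS_algebraMap, Polynomial.coe_C, PowerSeries.coe_C]]
  have h1 : ((eps K M : FE K M) : LaurentSeries (FX K M)) = HahnSeries.single 1 1 :=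
    RatFunc.coe_X
  rw [h1, HahnSeries.C_apply, HahnSeries.single_mul_single, HahnSeries.coeff_single_of_ne]
  omega

/-- If an invertible rational transformation `T` brings `a` into the canonical form
`ε Ãⱼ = T⁻¹ aⱼ T - T⁻¹ ∂ⱼT` with `(Ãⱼ)` a dlog-form with constant coefficient matrices,
then the ε-Laurent expansion of `Tr aⱼ` has no negative orders. -/
theorem trace_no_negative_orders
    {K : Type*} [Field K] [CharZero K] {M N m : ℕ}
    -- the derivations `∂ j` of `F`, extending `∂/∂x_j` on the polynomial ring
    -- and annihilating the regulator
    (der : Fin M → Derivation K (FE K M) (FE K M))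
    (hderEps : ∀ j, der j (eps K M) = 0)
    (hder : ∀ (j : Fin M) (p : MvPolynomial (Fin M) K),
      der j (algebraMap (MvPolynomial (Fin M) K) (FE K M) p)
        = algebraMap (MvPolynomial (Fin M) K) (FE K M) (pderiv j p))
    -- the letters: pairwise non-associated irreducible polynomials in the invariants
    (L : Fin N → MvPolynomial (Fin M) K)
    (hLirr : ∀ l, Irreducible (L l))
    (hLass : ∀ l l', l ≠ l' → ¬ Associated (L l) (L l'))
    (a : Fin M → Matrix (Fin m) (Fin m) (FE K M))
    (T : Matrix (Fin m) (Fin m) (FE K M)) (hT : IsUnit T.det)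
    -- the constant coefficient matrices of the dlog-form Ã
    (α : Fin N → Matrix (Fin m) (Fin m) K)
    (heq : ∀ j, T⁻¹ * a j * T - T⁻¹ * T.map (der j)
      = eps K M • ∑ l, dlogTerm L j l • (α l).map (algebraMap K (FE K M))) :
    ∀ (j : Fin M) (k : ℤ), k < 0 → coeffL (Matrix.trace (a j)) k = 0 := by
  intro j k hk
  set D := der j with hD
  have hDX : D RatFunc.X = 0 := hderEps j
  -- the derivation maps constants to constants
  have hDC : ∀ c : FX K M, ∃ c', D (RatFunc.C c) = RatFunc.C c' := by
    intro c
    obtain ⟨p, q, hq, hpq⟩ := IsFractionRing.div_surjective (A := MvPolynomial (Fin M) K) c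
    have hq0 : q ≠ 0 := nonZeroDivisors.ne_zero hq
    have hqE0 : algebraMap (MvPolynomial (Fin M) K) (FE K M) q ≠ 0 := by
      rw [algMv_eq]
      simp only [ne_eq, map_eq_zero]
      exact fun h => hq0 ((map_eq_zero_iff _ (IsFractionRing.injective _ _)).mp h)
    refine ⟨(algebraMap _ (FX K M) (pderiv j p) - c * algebraMap _ (FX K M) (pderiv j q))
      / algebraMap _ (FX K M) q, ?_⟩
    have hCc : RatFunc.C c = algebraMap (MvPolynomial (Fin M) K) (FE K M) p
        / algebraMap (MvPolynomial (Fin M) K) (FE K M) q := by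
      rw [algMv_eq, algMv_eq, ← map_div₀ (RatFunc.C : FX K M →+* FE K M), hpq]
    have hrel : RatFunc.C c * algebraMap (MvPolynomial (Fin M) K) (FE K M) q
        = algebraMap (MvPolynomial (Fin M) K) (FE K M) p := by
      rw [hCc, div_mul_cancel₀ _ hqE0]
    have h1 := congrArg D hrel
    rw [D.leibniz, smul_eq_mul, smul_eq_mul, hder j q, hder j p] at h1
    have h2 : D (RatFunc.C c)
        = (algebraMap (MvPolynomial (Fin M) K) (FE K M) (pderiv j p)
            - RatFunc.C c * algebraMap (MvPolynomial (Fin M) K) (FE K M) (pderiv j q))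
          / algebraMap (MvPolynomial (Fin M) K) (FE K M) q := by
      rw [eq_div_iff hqE0]
      linear_combination h1
    rw [h2, map_div₀, map_sub, map_mul, ← algMv_eq, ← algMv_eq, ← algMv_eq]
  -- the trace identity
  have h1 : (T⁻¹ * a j * T).trace = (a j).trace := by
    rw [Matrix.trace_mul_cycle, Matrix.mul_nonsing_inv T hT, one_mul]
  have h2 : (T⁻¹ * T.map (der j)).trace = D T.det / T.det := by
    rw [Matrix.inv_def, Ring.inverse_eq_inv', Matrix.smul_mul, Matrix.trace_smul,
      ← D.map_det T, smul_eq_mul, ← div_eq_inv_mul]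
  have htr := congrArg Matrix.trace (heq j)
  rw [Matrix.trace_sub, h1, h2, Matrix.trace_smul, smul_eq_mul, dlog_trace_eq L j α] at htr
  have hfin := sub_eq_iff_eq_add.mp htr
  have hdet : T.det ≠ 0 := hT.ne_zero
  rw [coeffL, hfin, map_add, HahnSeries.coeff_add, eps_C_coeff _ hk,
    coeff_neg_dlog D hDX hDC hdet hk, add_zero]
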